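/- Fix n ≥ 1 and a set E ⊆ Fin n × Fin n × Fin n of hyperedges, and let V, M and δ be as in the 3-dimensional matching reduction. Then there exists a map F : V → M taking at most n distinct values, with balanced fibers, such that δ(v, F v) ≤ 1 for every v ∈ V, if and only if E contains a perfect matching, i.e., a subset H ⊆ E of cardinality n such that the maps e ↦ e.1, e ↦ e.2 and e ↦ e.3 are each injective on H. (Hence the fair n-center cost of the instance is 1 when a perfect matching exists and 2 otherwise.) -/

import Mathlib

open scoped Classical

/-- Vertex `(j,u)` of the tripartite hypergraph is incident to hyperedge `e`
iff the `j`-th coordinate of `e` is `u`. -/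
def Incident {n : ℕ} (v : Fin 3 × Fin n) (e : Fin n × Fin n × Fin n) : Prop :=
  (v.1 = 0 ∧ e.1 = v.2) ∨ (v.1 = 1 ∧ e.2.1 = v.2) ∨ (v.1 = 2 ∧ e.2.2 = v.2)

/-- The distance of the 3-dimensional matching reduction on `M = V ⊕ E`:
`0` on the diagonal, `1` between a vertex and an incident hyperedge, `2` otherwise. -/
noncomputable def delta {n : ℕ} (E : Set (Fin n × Fin n × Fin n)) :
    ((Fin 3 × Fin n) ⊕ ↥E) → ((Fin 3 × Fin n) ⊕ ↥E) → ℝ := fun x y =>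
  if x = y then 0
  else
    match x, y with
    | Sum.inl v, Sum.inr e => if Incident v e.1 then 1 else 2
    | Sum.inr e, Sum.inl v => if Incident v e.1 then 1 else 2
    | _, _ => 2

/-- A map takes at most `k` distinct values. -/
def AtMostKValues {α β : Type*} (k : ℕ) (f : α → β) : Prop :=
  ∃ S : Finset β, S.card ≤ k ∧ ∀ x, f x ∈ S

/-- A map on the vertex set `Fin 3 × Fin n` has balanced fibers: each fiber contains
equally many vertices of each of the 3 colors. -/
def BalancedFibers {C : Type*} {n : ℕ} (F : Fin 3 × Fin n → C) : Prop :=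
  ∀ (z : C) (j j' : Fin 3),
    Nat.card {u : Fin n // F (j, u) = z} = Nat.card {u : Fin n // F (j', u) = z}

def pcoord {n : ℕ} (j : Fin 3) (e : Fin n × Fin n × Fin n) : Fin n :=
  if j = 0 then e.1 else if j = 1 then e.2.1 else e.2.2

lemma incident_iff_pcoord {n : ℕ} (j : Fin 3) (u : Fin n) (e : Fin n × Fin n × Fin n) :
    Incident (j, u) e ↔ pcoord j e = u := by
  fin_cases j <;> simp [Incident, pcoord]

lemma delta_inl_inr {n : ℕ} (E : Set (Fin n × Fin n × Fin n)) (v : Fin 3 × Fin n) (e : ↥E) :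
    delta E (Sum.inl v) (Sum.inr e) = if Incident v e.1 then 1 else 2 := by
  simp [delta]

lemma delta_inl_inl {n : ℕ} (E : Set (Fin n × Fin n × Fin n)) (v w : Fin 3 × Fin n)
    (h : v ≠ w) : delta E (Sum.inl v) (Sum.inl w) = 2 := by
  simp [delta, h]

/-- There is a fair `n`-center clustering of radius `1` of the 3-dimensional matching
instance iff the hypergraph has a perfect matching. -/
theorem fair_center_radius_one_iff_perfect_matching {n : ℕ} (hn : 1 ≤ n)
    (E : Set (Fin n × Fin n × Fin n)) :
    (∃ F : Fin 3 × Fin n → (Fin 3 × Fin n) ⊕ ↥E,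
        AtMostKValues n F ∧ BalancedFibers F ∧
          ∀ v : Fin 3 × Fin n, delta E (Sum.inl v) (F v) ≤ 1) ↔
      ∃ H : Finset (Fin n × Fin n × Fin n), ↑H ⊆ E ∧ H.card = n ∧
        Set.InjOn (fun e : Fin n × Fin n × Fin n => e.1) ↑H ∧
        Set.InjOn (fun e : Fin n × Fin n × Fin n => e.2.1) ↑H ∧
        Set.InjOn (fun e : Fin n × Fin n × Fin n => e.2.2) ↑H := by
  constructor
  · rintro ⟨F, _, hbal, hdist⟩
    -- every vertex maps to an incident hyperedge
    have key : ∀ v : Fin 3 × Fin n, ∃ e : ↥E, F v = Sum.inr e ∧ Incident v e.1 := by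
      intro v
      cases hF : F v with
      | inl w =>
        by_cases hw : w = v
        · exfalso
          subst hw
          -- the fiber of `inl w` at color `w.1` is nonempty
          have hpos : 0 < Nat.card {u : Fin n // F (w.1, u) = Sum.inl w} := by
            refine Nat.card_pos_iff.mpr ⟨⟨w.2, by rwa [Prod.mk.eta]⟩, inferInstance⟩
          have hpos' : 0 < Nat.card {u : Fin n // F (w.1 + 1, u) = Sum.inl w} := by
            rwa [hbal (Sum.inl w) (w.1 + 1) w.1]
          obtain ⟨⟨u, hu⟩⟩ := Nat.card_pos_iff.mp hpos' |>.1
          have hne : (w.1 + 1, u) ≠ w := by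
            intro h
            have : w.1 + 1 = w.1 := congrArg Prod.fst h
            have h3 : ∀ j : Fin 3, j + 1 ≠ j := by decide
            exact h3 w.1 this
          have := hdist (w.1 + 1, u)
          rw [hu, delta_inl_inl E _ _ hne] at this
          norm_num at this
        · exfalso
          have := hdist v
          rw [hF, delta_inl_inl E _ _ (fun h => hw h.symm)] at this
          norm_num at this
      | inr e =>
        refine ⟨e, rfl, ?_⟩
        by_contra hni
        have := hdist v
        rw [hF, delta_inl_inr, if_neg hni] at this
        norm_num at this
    choose f hf hincf using key
    have hp : ∀ (j : Fin 3) (u : Fin n), pcoord j (f (j, u)).1 = u := fun j u =>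
      (incident_iff_pcoord j u _).mp (hincf (j, u))
    -- the candidate matching
    set H : Finset (Fin n × Fin n × Fin n) :=
      Finset.image (fun u : Fin n => (f (0, u)).1) Finset.univ with hHdef
    have hGinj : Function.Injective (fun u : Fin n => (f (0, u)).1) := by
      intro u u' h
      have h' : (↑(f (0, u)) : Fin n × Fin n × Fin n) = ↑(f (0, u')) := h
      have h1 := hp 0 u
      have h2 := hp 0 u'
      rw [← h1, h']
      exact h2
    have hcard : H.card = n := by
      rw [hHdef, Finset.card_image_of_injective _ hGinj, Finset.card_univ, Fintype.card_fin]
    -- key: for every `u` and color `j`, the vertex `(j, pcoord j (f (0,u)).1)` maps to `F (0,u)`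
    have hkey : ∀ (u : Fin n) (j : Fin 3), F (j, pcoord j (f (0, u)).1) = F (0, u) := by
      intro u j
      have hpos : 0 < Nat.card {u' : Fin n // F (0, u') = F (0, u)} :=
        Nat.card_pos_iff.mpr ⟨⟨u, rfl⟩, inferInstance⟩
      have hpos' : 0 < Nat.card {u' : Fin n // F (j, u') = F (0, u)} := by
        rwa [hbal (F (0, u)) j 0]
      obtain ⟨⟨u', hu'⟩⟩ := Nat.card_pos_iff.mp hpos' |>.1
      have hfe : f (j, u') = f (0, u) := by
        have := hu'
        rw [hf (j, u'), hf (0, u)] at this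
        exact Sum.inr_injective this
      have : pcoord j (f (0, u)).1 = u' := by rw [← hfe]; exact hp j u'
      rw [this]; exact hu'
    have hinjon : ∀ j : Fin 3, Set.InjOn (pcoord j) (H : Set (Fin n × Fin n × Fin n)) := by
      intro j e he e' he' hpe
      simp only [hHdef, Finset.coe_image, Set.mem_image] at he he'
      obtain ⟨u, -, hu⟩ := he
      obtain ⟨u', -, hu'⟩ := he'
      have h1 : F (j, pcoord j e) = F (0, u) := by rw [← hu]; exact hkey u j
      have h2 : F (j, pcoord j e') = F (0, u') := by rw [← hu']; exact hkey u' j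
      rw [hpe, h2] at h1
      have : f (0, u') = f (0, u) := by
        have := h1
        rw [hf (0, u'), hf (0, u)] at this
        exact Sum.inr_injective this
      rw [← hu, ← hu', this]
    refine ⟨H, ?_, hcard, ?_, ?_, ?_⟩
    · intro e he
      simp only [hHdef, Finset.coe_image, Set.mem_image] at he
      obtain ⟨u, -, hu⟩ := he
      rw [← hu]
      exact (f (0, u)).2
    · have := hinjon 0; simpa [pcoord, Set.InjOn] using this
    · have := hinjon 1; simpa [pcoord, Set.InjOn] using this
    · have := hinjon 2; simpa [pcoord, Set.InjOn] using this
  · rintro ⟨H, hHE, hcard, h1, h2, h3⟩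
    have hinj : ∀ j : Fin 3, Set.InjOn (pcoord j) (H : Set (Fin n × Fin n × Fin n)) := by
      intro j
      fin_cases j
      · simpa [pcoord, Set.InjOn] using h1
      · simpa [pcoord, Set.InjOn] using h2
      · simpa [pcoord, Set.InjOn] using h3
    have hsurj : ∀ (j : Fin 3) (u : Fin n), ∃ e ∈ H, pcoord j e = u := by
      intro j u
      have hc : (H.image (pcoord j)).card = n := by
        rw [Finset.card_image_of_injOn (hinj j), hcard]
      have huniv : H.image (pcoord j) = Finset.univ :=
        Finset.eq_univ_of_card _ (by rw [hc, Fintype.card_fin])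
      have : u ∈ H.image (pcoord j) := huniv ▸ Finset.mem_univ u
      simpa [Finset.mem_image] using this
    choose g hgH hgp using hsurj
    refine ⟨fun v => Sum.inr ⟨g v.1 v.2, hHE (hgH v.1 v.2)⟩, ?_, ?_, ?_⟩
    · refine ⟨H.attach.image (fun e => Sum.inr ⟨e.1, hHE e.2⟩), ?_, ?_⟩
      · calc (H.attach.image (fun e => (Sum.inr ⟨e.1, hHE e.2⟩ : (Fin 3 × Fin n) ⊕ ↥E))).card
            ≤ H.attach.card := Finset.card_image_le
          _ = n := by rw [Finset.card_attach, hcard]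
      · intro v
        exact Finset.mem_image.mpr ⟨⟨g v.1 v.2, hgH v.1 v.2⟩, Finset.mem_attach _ _, rfl⟩
    · intro z j j'
      suffices h : ∀ j : Fin 3,
          Nat.card {u : Fin n // (Sum.inr ⟨g j u, hHE (hgH j u)⟩ : (Fin 3 × Fin n) ⊕ ↥E) = z}
            = if ∃ e : ↥E, z = Sum.inr e ∧ (e : Fin n × Fin n × Fin n) ∈ H then 1 else 0 by
        rw [h j, h j']
      intro i
      by_cases hz : ∃ e : ↥E, z = Sum.inr e ∧ (e : Fin n × Fin n × Fin n) ∈ H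
      · obtain ⟨e, rfl, heH⟩ := hz
        rw [if_pos ⟨e, rfl, heH⟩]
        have hiff : ∀ u : Fin n,
            ((Sum.inr ⟨g i u, hHE (hgH i u)⟩ : (Fin 3 × Fin n) ⊕ ↥E) = Sum.inr e)
              ↔ u = pcoord i (e : Fin n × Fin n × Fin n) := by
          intro u
          constructor
          · intro h
            have : g i u = (e : Fin n × Fin n × Fin n) :=
              congrArg Subtype.val (Sum.inr_injective h)
            rw [← this, hgp i u]
          · intro h
            have : g i u = (e : Fin n × Fin n × Fin n) := by
              apply hinj i (hgH i u) heH
              rw [hgp i u, h]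
            congr 1
            exact Subtype.ext this
        rw [Nat.card_congr (Equiv.subtypeEquivRight hiff), Nat.card_eq_fintype_card,
          Fintype.card_subtype_eq]
      · rw [if_neg hz]
        have : IsEmpty {u : Fin n //
            (Sum.inr ⟨g i u, hHE (hgH i u)⟩ : (Fin 3 × Fin n) ⊕ ↥E) = z} :=
          ⟨fun ⟨u, hu⟩ => hz ⟨⟨g i u, hHE (hgH i u)⟩, hu.symm, hgH i u⟩⟩
        exact Nat.card_of_isEmpty
    · rintro ⟨j, u⟩
      rw [delta_inl_inr, if_pos ((incident_iff_pcoord j u _).mpr (hgp j u))]
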